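/- (Suboptimality of [0, α2 − α1]): With bimodal execution time and two machines, the policy with starting times [0, α2 − α1] achieves the same expected completion time as the single-machine policy [0] (namely α1 p1 + α2 p2) but strictly larger expected machine time whenever p2 > 0 and α2 > α1. Hence any policy starting the second machine at a time t2 with α2 − α1 ≤ t2 < α2 is dominated by not using the second machine. -/
import Mathlib


/-- Expectation over the four atoms of (X1, X2), i.i.d. bimodal
(α1 w.p. p1, α2 w.p. p2). -/
def Ebim (p1 p2 α1 α2 : ℝ) (g : ℝ → ℝ → ℝ) : ℝ :=
  p1 * p1 * g α1 α1 + p1 * p2 * g α1 α2 + p2 * p1 * g α2 α1 + p2 * p2 * g α2 α2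

/-- Suboptimality of [0, α2 - α1]: for any t2 with α2 - α1 ≤ t2 < α2 (in
particular t2 = α2 - α1), the policy [0, t2] has the same expected completion
time α1 p1 + α2 p2 as the single-machine policy [0], but strictly larger
expected machine time (C = T + (T - t2)⁺) whenever p2 > 0 and α1 < α2.
Hence it is dominated by not using the second machine. -/
theorem stmt_6 (α1 α2 p1 p2 : ℝ) (hα1 : 0 < α1) (hα : α1 < α2)
    (hp1 : 0 < p1) (hp1' : p1 < 1) (hp2 : p2 = 1 - p1) :
    ∀ t2 : ℝ, α2 - α1 ≤ t2 → t2 < α2 →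
      Ebim p1 p2 α1 α2 (fun x1 x2 => min x1 (t2 + x2)) = α1 * p1 + α2 * p2 ∧
      Ebim p1 p2 α1 α2
          (fun x1 x2 => min x1 (t2 + x2) + max (min x1 (t2 + x2) - t2) 0)
        > α1 * p1 + α2 * p2 := by
  intro t2 ht1 ht2
  subst hp2
  have h11 : min α1 (t2 + α1) = α1 := min_eq_left (by linarith)
  have h12 : min α1 (t2 + α2) = α1 := min_eq_left (by linarith)
  have h21 : min α2 (t2 + α1) = α2 := min_eq_left (by linarith)
  have h22 : min α2 (t2 + α2) = α2 := min_eq_left (by linarith)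
  unfold Ebim
  simp only [h11, h12, h21, h22]
  constructor
  · ring
  · have hm2 : max (α2 - t2) 0 = α2 - t2 := max_eq_left (by linarith)
    have hm1 : (0:ℝ) ≤ max (α1 - t2) 0 := le_max_right _ _
    rw [hm2]
    nlinarith [mul_nonneg (mul_nonneg hp1.le hp1.le) hm1,
      mul_nonneg (mul_nonneg hp1.le (by linarith : (0:ℝ) ≤ 1 - p1)) hm1,
      mul_pos (by linarith : (0:ℝ) < 1 - p1) (by linarith : (0:ℝ) < α2 - t2)]
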